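/- arXiv:2509.14630 — 5 statements merged into one kernel-verified Lean document; each statement's English description precedes it below -/
import Mathlib

section
/- Work in the group GL(4, ℝ) of invertible 4×4 real matrices (homogeneous rigid transformations). Define the decoder D : (GL(4,ℝ) × GL(4,ℝ)) → GL(4,ℝ) → GL(4,ℝ) by D (T_be, T_bc) y = T_bc * y * T_bc⁻¹ * T_be. Then for all A, B, T_be, T_bc, y ∈ GL(4, ℝ), D (A * T_be * B, A * T_bc) y = A * (D (T_be, T_bc) y) * B. That is, D is equivariant to the embodiment transformation group acting on configurations by (T_be, T_bc) ↦ (A T_be B, A T_bc) and on actions by a ↦ A a B. -/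
/-- The decoder `D (T_be, T_bc) y = T_bc * y * T_bc⁻¹ * T_be`. -/
def decoder (m : GL (Fin 4) ℝ × GL (Fin 4) ℝ) (y : GL (Fin 4) ℝ) : GL (Fin 4) ℝ :=
  m.2 * y * m.2⁻¹ * m.1

/-- The decoder is equivariant to the embodiment transformation group acting on
configurations by `(T_be, T_bc) ↦ (A * T_be * B, A * T_bc)` and on actions by
`a ↦ A * a * B`. -/
theorem decoder_equivariant (A B Tbe Tbc y : GL (Fin 4) ℝ) :
    decoder (A * Tbe * B, A * Tbc) y = A * decoder (Tbe, Tbc) y * B := by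
  simp [decoder, mul_assoc]
end

section
/- Represent rigid transformations as pairs (R, t) with R a 3×3 real special orthogonal matrix and t ∈ ℝ³, composed by (R₁,t₁)·(R₂,t₂) = (R₁R₂, R₁t₂ + t₁). Define the revised decoder D_r on a configuration m = ((R_be, t_be), (R_bc, t_bc)) and a network output φ = (φ^R, φ^t) with φ^R ∈ SO(3), φ^t ∈ ℝ³ by D_r(m, φ) = (R_bc * φ^R * R_bcᵀ * R_be, R_bc • φ^t + t_be). Then for every base transformation A = (R_A, t_A) ∈ SE(3), D_r((A·(R_be,t_be), A·(R_bc,t_bc)), φ) = A · D_r(m, φ). That is, D_r is equivariant to base-frame transformations. -/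
open Matrix

/-- A rigid transformation, represented as a pair `(R, t)` of a 3×3 matrix and a vector. -/
abbrev Rigid := Matrix (Fin 3) (Fin 3) ℝ × (Fin 3 → ℝ)

/-- Composition `(R₁,t₁)·(R₂,t₂) = (R₁R₂, R₁t₂ + t₁)`. -/
def rcomp (x y : Rigid) : Rigid := (x.1 * y.1, x.1 *ᵥ y.2 + x.2)

/-- The revised decoder `D_r` of Eq. (13):
`D_r(((R_be,t_be),(R_bc,t_bc)), (φ^R, φ^t)) = (R_bc φ^R R_bcᵀ R_be, R_bc φ^t + t_be)`. -/
def Dr (m : Rigid × Rigid) (φ : Rigid) : Rigid :=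
  (m.2.1 * φ.1 * (m.2.1)ᵀ * m.1.1, m.2.1 *ᵥ φ.2 + m.1.2)

/-- The revised decoder `D_r` is equivariant to base-frame transformations
`(T_be, T_bc) ↦ (A·T_be, A·T_bc)`, `a ↦ A·a`, for `A ∈ SE(3)`. -/
theorem Dr_base_equivariant
    (RA : Matrix (Fin 3) (Fin 3) ℝ) (hRA : RA ∈ Matrix.specialOrthogonalGroup (Fin 3) ℝ)
    (tA : Fin 3 → ℝ)
    (Rbe : Matrix (Fin 3) (Fin 3) ℝ) (hRbe : Rbe ∈ Matrix.specialOrthogonalGroup (Fin 3) ℝ)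
    (tbe : Fin 3 → ℝ)
    (Rbc : Matrix (Fin 3) (Fin 3) ℝ) (hRbc : Rbc ∈ Matrix.specialOrthogonalGroup (Fin 3) ℝ)
    (tbc : Fin 3 → ℝ)
    (φR : Matrix (Fin 3) (Fin 3) ℝ) (hφR : φR ∈ Matrix.specialOrthogonalGroup (Fin 3) ℝ)
    (φt : Fin 3 → ℝ) :
    Dr (rcomp (RA, tA) (Rbe, tbe), rcomp (RA, tA) (Rbc, tbc)) (φR, φt) =
      rcomp (RA, tA) (Dr ((Rbe, tbe), (Rbc, tbc)) (φR, φt)) := by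
  have horth : RAᵀ * RA = 1 := hRA.1.1
  simp only [Dr, rcomp, Prod.mk.injEq]
  constructor
  · rw [Matrix.transpose_mul]
    calc RA * Rbc * φR * (Rbcᵀ * RAᵀ) * (RA * Rbe)
        = RA * Rbc * φR * Rbcᵀ * (RAᵀ * RA) * Rbe := by
          simp only [mul_assoc]
      _ = RA * (Rbc * φR * Rbcᵀ * Rbe) := by rw [horth, mul_one]; simp only [mul_assoc]
  · rw [← Matrix.mulVec_mulVec, Matrix.mulVec_add]
    abel
end

section
/- Represent rigid transformations as pairs (R, t) with R a 3×3 real special orthogonal matrix and t ∈ ℝ³, composed by (R₁,t₁)·(R₂,t₂) = (R₁R₂, R₁t₂ + t₁). Define the revised decoder D_r on a configuration m = ((R_be, t_be), (R_bc, t_bc)) and a network output φ = (φ^R, φ^t) with φ^R ∈ SO(3), φ^t ∈ ℝ³ by D_r(m, φ) = (R_bc * φ^R * R_bcᵀ * R_be, R_bc • φ^t + t_be). Then for every pure end-effector rotation B = (R_B, 0) with R_B ∈ SO(3), D_r(((R_be,t_be)·B, (R_bc,t_bc)), φ) = D_r(m, φ) · B. That is, D_r is equivariant to rotational re-definitions of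 the end-effector frame. -/
open Matrix

/-- The revised decoder `D_r` is equivariant to rotational re-definitions of the
end-effector frame: for a pure end-effector rotation `B = (R_B, 0)`,
`D_r((T_be·B, T_bc), φ) = D_r(m, φ) · B`. -/
theorem Dr_ee_rotation_equivariant
    (RB : Matrix (Fin 3) (Fin 3) ℝ) (hRB : RB ∈ Matrix.specialOrthogonalGroup (Fin 3) ℝ)
    (Rbe : Matrix (Fin 3) (Fin 3) ℝ) (hRbe : Rbe ∈ Matrix.specialOrthogonalGroup (Fin 3) ℝ)
    (tbe : Fin 3 → ℝ)
    (Rbc : Matrix (Fin 3) (Fin 3) ℝ) (hRbc : Rbc ∈ Matrix.specialOrthogonalGroup (Fin 3) ℝ)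
    (tbc : Fin 3 → ℝ)
    (φR : Matrix (Fin 3) (Fin 3) ℝ) (hφR : φR ∈ Matrix.specialOrthogonalGroup (Fin 3) ℝ)
    (φt : Fin 3 → ℝ) :
    Dr (rcomp (Rbe, tbe) (RB, 0), (Rbc, tbc)) (φR, φt) =
      rcomp (Dr ((Rbe, tbe), (Rbc, tbc)) (φR, φt)) (RB, 0) := by
  simp [Dr, rcomp, Matrix.mulVec_zero, mul_assoc]
end

section
/- Represent rigid transformations as pairs (R, t) with R a 3×3 real special orthogonal matrix and t ∈ ℝ³, composed by (R₁,t₁)·(R₂,t₂) = (R₁R₂, R₁t₂ + t₁). Define the revised decoder D_r on a configuration m = ((R_be, t_be), (R_bc, t_bc)) and a network output φ = (φ^R, φ^t) with φ^R ∈ SO(3), φ^t ∈ ℝ³ by D_r(m, φ) = (R_bc * φ^R * R_bcᵀ * R_be, R_bc • φ^t + t_be). Then D_r is NOT equivariant to pure end-effector translations: there exist a configuration m, a network output φ, and a nonzero vector t_B ∈ ℝ³ such that, with B = (1, t_B), D_r((T_be·B, T_bc), φ) ≠ D_r(m, φ) · B. -/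
open Matrix

lemma rot_mem : (!![0,-1,0;1,0,0;0,0,1] : Matrix (Fin 3) (Fin 3) ℝ) ∈
    Matrix.specialOrthogonalGroup (Fin 3) ℝ := by
  rw [Matrix.mem_specialOrthogonalGroup_iff]
  constructor
  · rw [Matrix.mem_orthogonalGroup_iff]
    ext i j
    simp [Matrix.mul_apply, Fin.sum_univ_three, Matrix.one_apply]
    fin_cases i <;> fin_cases j <;> simp [Fin.ext_iff, Matrix.vecHead, Matrix.vecTail]
  · simp [Matrix.det_fin_three]

/-- The revised decoder `D_r` is NOT equivariant to pure end-effector translations: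
there exist a configuration, a network output, and a nonzero `t_B` such that, with
`B = (1, t_B)`, `D_r((T_be·B, T_bc), φ) ≠ D_r(m, φ) · B`. -/
theorem Dr_not_ee_translation_equivariant :
    ∃ (Rbe Rbc φR : Matrix (Fin 3) (Fin 3) ℝ) (tbe tbc φt tB : Fin 3 → ℝ),
      Rbe ∈ Matrix.specialOrthogonalGroup (Fin 3) ℝ ∧
      Rbc ∈ Matrix.specialOrthogonalGroup (Fin 3) ℝ ∧
      φR ∈ Matrix.specialOrthogonalGroup (Fin 3) ℝ ∧
      tB ≠ 0 ∧
      Dr (rcomp (Rbe, tbe) (1, tB), (Rbc, tbc)) (φR, φt) ≠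
        rcomp (Dr ((Rbe, tbe), (Rbc, tbc)) (φR, φt)) (1, tB) := by
  refine ⟨1, 1, !![0,-1,0;1,0,0;0,0,1], 0, 0, 0, ![1,0,0],
    Submonoid.one_mem _, Submonoid.one_mem _, rot_mem, ?_, ?_⟩
  · intro h
    have := congrFun h 0
    norm_num at this
  · intro h
    have := congrArg Prod.snd h
    simp only [Dr, rcomp] at this
    have h0 := congrFun this 1
    simp [Matrix.mulVec, dotProduct, Fin.sum_univ_three] at h0
end

section
/- Represent rigid transformations as pairs (R, t) with R a 3×3 real special orthogonal matrix and t ∈ ℝ³, composed by (R₁,t₁)·(R₂,t₂) = (R₁R₂, R₁t₂ + t₁). Given a configuration m = ((R_be, t_be), (R_bc, t_bc)) and an action a = (R_be∗, t_be∗), define the revised learning objective y_r(m, a) = ( R_bcᵀ * R_be∗ * R_beᵀ * R_bc , R_bcᵀ • (t_be∗ − t_be) ). Then y_r is invariant under all base transformations and all pure end-effector rotations: for every A = (R_A, t_A) ∈ SE(3) and every B = (R_B, 0) with R_B ∈ SO(3), y_r( (A·T_be·B, A·T_bc), A·(R_be∗,t_be∗)·B ) = y_r( m, (R_be∗, t_be∗)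 ). -/
open Matrix

/-- The revised learning objective of Eq. (13):
`y_r(((R_be,t_be),(R_bc,t_bc)), (R_be∗,t_be∗)) =
  (R_bcᵀ R_be∗ R_beᵀ R_bc, R_bcᵀ (t_be∗ − t_be))`. -/
def yr (m : Rigid × Rigid) (a : Rigid) : Rigid :=
  ((m.2.1)ᵀ * a.1 * (m.1.1)ᵀ * m.2.1, (m.2.1)ᵀ *ᵥ (a.2 - m.1.2))

/-- The revised learning objective `y_r` is invariant under all base transformations
`A = (R_A, t_A) ∈ SE(3)` and all pure end-effector rotations `B = (R_B, 0)`. -/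
theorem yr_invariant
    (RA : Matrix (Fin 3) (Fin 3) ℝ) (hRA : RA ∈ Matrix.specialOrthogonalGroup (Fin 3) ℝ)
    (tA : Fin 3 → ℝ)
    (RB : Matrix (Fin 3) (Fin 3) ℝ) (hRB : RB ∈ Matrix.specialOrthogonalGroup (Fin 3) ℝ)
    (Rbe : Matrix (Fin 3) (Fin 3) ℝ) (hRbe : Rbe ∈ Matrix.specialOrthogonalGroup (Fin 3) ℝ)
    (tbe : Fin 3 → ℝ)
    (Rbc : Matrix (Fin 3) (Fin 3) ℝ) (hRbc : Rbc ∈ Matrix.specialOrthogonalGroup (Fin 3) ℝ)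
    (tbc : Fin 3 → ℝ)
    (Rbes : Matrix (Fin 3) (Fin 3) ℝ) (hRbes : Rbes ∈ Matrix.specialOrthogonalGroup (Fin 3) ℝ)
    (tbes : Fin 3 → ℝ) :
    yr (rcomp (rcomp (RA, tA) (Rbe, tbe)) (RB, 0),
        rcomp (RA, tA) (Rbc, tbc))
       (rcomp (rcomp (RA, tA) (Rbes, tbes)) (RB, 0)) =
      yr ((Rbe, tbe), (Rbc, tbc)) (Rbes, tbes) := by
  have hA : RAᵀ * RA = 1 := by
    have := hRA.1.1
    simpa [Matrix.star_eq_conjTranspose, Matrix.conjTranspose, show (⇑(starRingEnd ℝ) : ℝ → ℝ) = id from funext fun x => by simp, Matrix.map_id] using this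
  have hB : RB * RBᵀ = 1 := by
    have := hRB.1.2
    simpa [Matrix.star_eq_conjTranspose, Matrix.conjTranspose, show (⇑(starRingEnd ℝ) : ℝ → ℝ) = id from funext fun x => by simp, Matrix.map_id] using this
  have hAc : ∀ X : Matrix (Fin 3) (Fin 3) ℝ, RAᵀ * (RA * X) = X := fun X => by
    rw [← Matrix.mul_assoc, hA, Matrix.one_mul]
  have hBc : ∀ X : Matrix (Fin 3) (Fin 3) ℝ, RB * (RBᵀ * X) = X := fun X => by
    rw [← Matrix.mul_assoc, hB, Matrix.one_mul]
  have hAv : ∀ v : Fin 3 → ℝ, RAᵀ *ᵥ (RA *ᵥ v) = v := fun v => by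
    rw [Matrix.mulVec_mulVec, hA, Matrix.one_mulVec]
  simp only [yr, rcomp, Prod.mk.injEq]
  constructor
  · simp only [Matrix.transpose_mul, Matrix.mul_assoc, hAc, hBc]
  · simp only [Matrix.mulVec_zero, zero_add, Matrix.transpose_mul,
      add_sub_add_right_eq_sub]
    rw [← Matrix.mulVec_sub, ← Matrix.mulVec_mulVec, hAv]
end
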